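/- Let (X_n)_{n∈ℤ} be H-valued random variables bounded by K, and suppose there exist copies (X'_n), (X''_n) of the sequence and an event A with P(A) ≥ 1 − β such that: (X''_n) is independent of (X_n), E[‖X_j − X'_j‖ 1_A] ≤ 2a for j ∈ {0, j}, and E‖X'_0 − X''_0‖ ≤ 2a. Then |E⟨X_0, X_j⟩ − ⟨EX_0, EX_j⟩| ≤ 2K²β + 4Ka. -/

import Mathlib

open MeasureTheory
open scoped RealInnerProductSpace

-- auxiliary: independence implies integral of inner product factors
lemma indep_integral_inner
    {H : Type*} [NormedAddCommGroup H] [InnerProductSpace ℝ H] [CompleteSpace H]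
    [SecondCountableTopology H] [MeasurableSpace H] [BorelSpace H]
    {Ω : Type*} [MeasurableSpace Ω] (μ : Measure Ω) [IsProbabilityMeasure μ]
    (f g : Ω → H) (hf : Measurable f) (hg : Measurable g) (K : ℝ)
    (hbf : ∀ᵐ ω ∂μ, ‖f ω‖ ≤ K) (hbg : ∀ᵐ ω ∂μ, ‖g ω‖ ≤ K)
    (hindep : ProbabilityTheory.IndepFun f g μ) :
    ∫ ω, ⟪f ω, g ω⟫ ∂μ = ⟪∫ ω, f ω ∂μ, ∫ ω, g ω ∂μ⟫ := by
  have hmap : μ.map (fun ω => (f ω, g ω)) = (μ.map f).prod (μ.map g) :=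
    (ProbabilityTheory.indepFun_iff_map_prod_eq_prod_map_map hf.aemeasurable hg.aemeasurable).mp
      hindep
  have hsK : MeasurableSet {x : H | ‖x‖ ≤ K} :=
    (isClosed_le continuous_norm continuous_const).measurableSet
  have hbf' : ∀ᵐ x ∂(μ.map f), ‖x‖ ≤ K := (ae_map_iff hf.aemeasurable hsK).mpr hbf
  have hbg' : ∀ᵐ y ∂(μ.map g), ‖y‖ ≤ K := (ae_map_iff hg.aemeasurable hsK).mpr hbg
  have hprob_f : IsProbabilityMeasure (μ.map f) := Measure.isProbabilityMeasure_map hf.aemeasurable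
  have hprob_g : IsProbabilityMeasure (μ.map g) := Measure.isProbabilityMeasure_map hg.aemeasurable
  have hintf : Integrable (id : H → H) (μ.map f) :=
    (integrable_const K).mono' aestronglyMeasurable_id hbf'
  have hintg : Integrable (id : H → H) (μ.map g) :=
    (integrable_const K).mono' aestronglyMeasurable_id hbg'
  have hbprod : ∀ᵐ p ∂((μ.map f).prod (μ.map g)), |⟪p.1, p.2⟫| ≤ K * K := by
    rw [MeasureTheory.Measure.ae_prod_iff_ae_ae]
    · filter_upwards [hbf'] with x hx
      filter_upwards [hbg'] with y hy
      calc |⟪x, y⟫| ≤ ‖x‖ * ‖y‖ := abs_real_inner_le_norm x y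
        _ ≤ K * K := by
            have h0 : (0:ℝ) ≤ ‖y‖ := norm_nonneg _
            nlinarith [norm_nonneg x]
    · exact measurableSet_le (continuous_inner.abs.measurable) measurable_const
  have hintprod : Integrable (fun p : H × H => ⟪p.1, p.2⟫) ((μ.map f).prod (μ.map g)) :=
    (integrable_const (K * K)).mono' continuous_inner.aestronglyMeasurable
      (hbprod.mono fun p hp => by simpa [Real.norm_eq_abs] using hp)
  calc ∫ ω, ⟪f ω, g ω⟫ ∂μ
      = ∫ p : H × H, ⟪p.1, p.2⟫ ∂(μ.map (fun ω => (f ω, g ω))) :=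
        (integral_map (f := fun p : H × H => ⟪p.1, p.2⟫) (hf.prodMk hg).aemeasurable
          continuous_inner.aestronglyMeasurable).symm
    _ = ∫ p : H × H, ⟪p.1, p.2⟫ ∂((μ.map f).prod (μ.map g)) := by rw [hmap]
    _ = ∫ x, ∫ y, ⟪x, y⟫ ∂(μ.map g) ∂(μ.map f) := integral_prod _ hintprod
    _ = ∫ x, ⟪x, ∫ y, y ∂(μ.map g)⟫ ∂(μ.map f) := by
        refine integral_congr_ae (Filter.Eventually.of_forall fun x => ?_)
        simpa using integral_inner hintg x
    _ = ∫ x, ⟪∫ y, y ∂(μ.map g), x⟫ ∂(μ.map f) := by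
        simp_rw [real_inner_comm]
    _ = ⟪∫ y, y ∂(μ.map g), ∫ x, x ∂(μ.map f)⟫ := by
        simpa using integral_inner hintf (∫ y, y ∂(μ.map g))
    _ = ⟪∫ ω, f ω ∂μ, ∫ ω, g ω ∂μ⟫ := by
        rw [integral_map (f := fun x : H => x) hf.aemeasurable aestronglyMeasurable_id,
          integral_map (f := fun x : H => x) hg.aemeasurable aestronglyMeasurable_id,
          real_inner_comm]

/-- Covariance inequality (Lemma 1, bounded case): given a coupling `(X', X'')` of the
bounded sequence `(X_n)` with `X''` independent of `X`, an event `A` with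
`P(A) ≥ 1 − β`, and approximation bounds `2a`, one has
`|E⟨X_0, X_j⟩ − ⟨EX_0, EX_j⟩| ≤ 2K²β + 4Ka`. -/
theorem stmt_15
    {H : Type*} [NormedAddCommGroup H] [InnerProductSpace ℝ H] [CompleteSpace H]
    [SecondCountableTopology H] [MeasurableSpace H] [BorelSpace H]
    {Ω : Type*} [MeasurableSpace Ω] (μ : Measure Ω) [IsProbabilityMeasure μ]
    (X X' X'' : ℤ → Ω → H) (j : ℤ)
    (hmeas : ∀ i, Measurable (X i)) (hmeas' : ∀ i, Measurable (X' i))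
    (hmeas'' : ∀ i, Measurable (X'' i))
    (K a β : ℝ) (hK : 0 ≤ K) (ha : 0 ≤ a) (hβ : 0 ≤ β)
    (hbd : ∀ i, ∀ᵐ ω ∂μ, ‖X i ω‖ ≤ K)
    (hbd' : ∀ i, ∀ᵐ ω ∂μ, ‖X' i ω‖ ≤ K)
    (hbd'' : ∀ i, ∀ᵐ ω ∂μ, ‖X'' i ω‖ ≤ K)
    -- (X'_0, X'_j) is a copy of (X_0, X_j)
    (hcopy : μ.map (fun ω => (X' 0 ω, X' j ω)) = μ.map (fun ω => (X 0 ω, X j ω)))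
    -- X''_0 is a copy of X_0, independent of the sequence (X_n)
    (hcopy'' : μ.map (X'' 0) = μ.map (X 0))
    (hindep : ProbabilityTheory.IndepFun (X'' 0) (fun ω => (X 0 ω, X j ω)) μ)
    (A : Set Ω) (hA : MeasurableSet A) (hPA : (1 - β : ℝ) ≤ (μ A).toReal)
    (happrox0 : (∫ ω, Set.indicator A (fun ω' => ‖X 0 ω' - X' 0 ω'‖) ω ∂μ) ≤ 2 * a)
    (happroxj : (∫ ω, Set.indicator A (fun ω' => ‖X j ω' - X' j ω'‖) ω ∂μ) ≤ 2 * a)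
    (happrox'' : (∫ ω, ‖X' 0 ω - X'' 0 ω‖ ∂μ) ≤ 2 * a) :
    |(∫ ω, ⟪X 0 ω, X j ω⟫ ∂μ) - ⟪∫ ω, X 0 ω ∂μ, ∫ ω, X j ω ∂μ⟫|
      ≤ 2 * K ^ 2 * β + 4 * K * a := by
  -- measurability shortcuts
  have hm0 := hmeas 0; have hmj := hmeas j
  have hm'0 := hmeas' 0; have hm'j := hmeas' j; have hm''0 := hmeas'' 0
  -- generic integrability from boundedness
  have hint : ∀ (f : Ω → ℝ) (C : ℝ), Measurable f → (∀ᵐ ω ∂μ, ‖f ω‖ ≤ C) → Integrable f μ :=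
    fun f C hf hb => (integrable_const C).mono' hf.aestronglyMeasurable hb
  -- Step 1: copies
  have hE1 : ∫ ω, ⟪X' 0 ω, X' j ω⟫ ∂μ = ∫ ω, ⟪X 0 ω, X j ω⟫ ∂μ := by
    have h1 := integral_map (μ := μ) (f := fun p : H × H => ⟪p.1, p.2⟫)
      ((hm'0.prodMk hm'j).aemeasurable) continuous_inner.aestronglyMeasurable
    have h2 := integral_map (μ := μ) (f := fun p : H × H => ⟪p.1, p.2⟫)
      ((hm0.prodMk hmj).aemeasurable) continuous_inner.aestronglyMeasurable
    rw [← h1, ← h2, hcopy]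
  have hE2 : ∫ ω, X'' 0 ω ∂μ = ∫ ω, X 0 ω ∂μ := by
    have h1 := integral_map (μ := μ) (f := fun x : H => x) hm''0.aemeasurable
      aestronglyMeasurable_id
    have h2 := integral_map (μ := μ) (f := fun x : H => x) hm0.aemeasurable
      aestronglyMeasurable_id
    rw [← h1, ← h2, hcopy'']
  -- Step 2: independence
  have hindepj : ProbabilityTheory.IndepFun (X'' 0) (X j) μ :=
    hindep.comp measurable_id measurable_snd
  have hE3 : ∫ ω, ⟪X'' 0 ω, X j ω⟫ ∂μ = ⟪∫ ω, X 0 ω ∂μ, ∫ ω, X j ω ∂μ⟫ := by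
    rw [indep_integral_inner μ (X'' 0) (X j) hm''0 hmj K (hbd'' 0) (hbd j) hindepj, hE2]
  -- pointwise decomposition
  have hdecomp : ∀ ω, ⟪X' 0 ω, X' j ω⟫ - ⟪X'' 0 ω, X j ω⟫
      = ⟪X' 0 ω, X' j ω - X j ω⟫ + ⟪X' 0 ω - X'' 0 ω, X j ω⟫ := by
    intro ω
    rw [inner_sub_right, inner_sub_left]; ring
  -- integrabilities
  have hint1 : Integrable (fun ω => ⟪X' 0 ω, X' j ω - X j ω⟫) μ := by
    refine hint _ (K * (2 * K)) (by exact (hm'0.inner (hm'j.sub hmj))) ?_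
    filter_upwards [hbd' 0, hbd' j, hbd j] with ω h1 h2 h3
    calc ‖(⟪X' 0 ω, X' j ω - X j ω⟫ : ℝ)‖ ≤ ‖X' 0 ω‖ * ‖X' j ω - X j ω‖ := by
          simpa [Real.norm_eq_abs] using abs_real_inner_le_norm (X' 0 ω) (X' j ω - X j ω)
      _ ≤ K * (2 * K) := by
          have := norm_sub_le (X' j ω) (X j ω)
          nlinarith [norm_nonneg (X' 0 ω), norm_nonneg (X' j ω - X j ω)]
  have hint2 : Integrable (fun ω => ⟪X' 0 ω - X'' 0 ω, X j ω⟫) μ := by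
    refine hint _ (2 * K * K) (by exact ((hm'0.sub hm''0).inner hmj)) ?_
    filter_upwards [hbd' 0, hbd'' 0, hbd j] with ω h1 h2 h3
    calc ‖(⟪X' 0 ω - X'' 0 ω, X j ω⟫ : ℝ)‖ ≤ ‖X' 0 ω - X'' 0 ω‖ * ‖X j ω‖ := by
          simpa [Real.norm_eq_abs] using abs_real_inner_le_norm (X' 0 ω - X'' 0 ω) (X j ω)
      _ ≤ 2 * K * K := by
          have := norm_sub_le (X' 0 ω) (X'' 0 ω)
          nlinarith [norm_nonneg (X' 0 ω - X'' 0 ω), norm_nonneg (X j ω)]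
  have hintdj : Integrable (fun ω => ‖X' j ω - X j ω‖) μ := by
    refine hint _ (2 * K) (by exact (hm'j.sub hmj).norm) ?_
    filter_upwards [hbd' j, hbd j] with ω h1 h2
    simp only [norm_norm]
    calc ‖X' j ω - X j ω‖ ≤ ‖X' j ω‖ + ‖X j ω‖ := norm_sub_le _ _
      _ ≤ 2 * K := by linarith
  have hintd0 : Integrable (fun ω => ‖X' 0 ω - X'' 0 ω‖) μ := by
    refine hint _ (2 * K) (by exact (hm'0.sub hm''0).norm) ?_
    filter_upwards [hbd' 0, hbd'' 0] with ω h1 h2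
    simp only [norm_norm]
    calc ‖X' 0 ω - X'' 0 ω‖ ≤ ‖X' 0 ω‖ + ‖X'' 0 ω‖ := norm_sub_le _ _
      _ ≤ 2 * K := by linarith
  -- bound on μ Aᶜ
  have hAc : (μ Aᶜ).toReal ≤ β := by
    have h1 : μ Aᶜ = 1 - μ A := by
      rw [measure_compl hA (measure_ne_top μ A)]; simp
    have h2 : (μ A) ≤ 1 := prob_le_one
    rw [h1, ENNReal.toReal_sub_of_le h2 (by simp)]
    simp only [ENNReal.toReal_one]
    linarith
  -- bound ∫ ‖X' j - X j‖
  have hBdj : ∫ ω, ‖X' j ω - X j ω‖ ∂μ ≤ 2 * a + 2 * K * β := by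
    have hsplit : ∀ ω, ‖X' j ω - X j ω‖
        = Set.indicator A (fun ω' => ‖X j ω' - X' j ω'‖) ω
          + Set.indicator Aᶜ (fun ω' => ‖X' j ω' - X j ω'‖) ω := by
      intro ω
      by_cases h : ω ∈ A
      · simp [Set.indicator_of_mem h, Set.indicator_of_notMem (Set.notMem_compl_iff.mpr h),
          norm_sub_rev (X j ω)]
      · simp [Set.indicator_of_notMem h, Set.indicator_of_mem (Set.mem_compl h)]
    have hintI1 : Integrable (Set.indicator A fun ω' => ‖X j ω' - X' j ω'‖) μ := by
      refine (hintdj.congr ?_).indicator hA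
      exact Filter.Eventually.of_forall fun ω => (norm_sub_rev _ _)
    have hintI2 : Integrable (Set.indicator Aᶜ fun ω' => ‖X' j ω' - X j ω'‖) μ :=
      hintdj.indicator hA.compl
    have hI2 : ∫ ω, Set.indicator Aᶜ (fun ω' => ‖X' j ω' - X j ω'‖) ω ∂μ
        ≤ 2 * K * (μ Aᶜ).toReal := by
      have hle : ∀ᵐ ω ∂μ, Set.indicator Aᶜ (fun ω' => ‖X' j ω' - X j ω'‖) ω
          ≤ Set.indicator Aᶜ (fun _ => 2 * K) ω := by
        filter_upwards [hbd' j, hbd j] with ω h1 h2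
        by_cases h : ω ∈ Aᶜ
        · simp only [Set.indicator_of_mem h]
          calc ‖X' j ω - X j ω‖ ≤ ‖X' j ω‖ + ‖X j ω‖ := norm_sub_le _ _
            _ ≤ 2 * K := by linarith
        · simp [Set.indicator_of_notMem h]
      calc ∫ ω, Set.indicator Aᶜ (fun ω' => ‖X' j ω' - X j ω'‖) ω ∂μ
          ≤ ∫ ω, Set.indicator Aᶜ (fun _ => 2 * K) ω ∂μ := by
            refine integral_mono_ae hintI2 ?_ hle
            exact (integrable_const (2 * K)).indicator hA.compl
        _ = 2 * K * (μ Aᶜ).toReal := by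
            rw [integral_indicator_const _ hA.compl]; simp [mul_comm, measureReal_def]
      -- end
    calc ∫ ω, ‖X' j ω - X j ω‖ ∂μ
        = ∫ ω, (Set.indicator A (fun ω' => ‖X j ω' - X' j ω'‖) ω
            + Set.indicator Aᶜ (fun ω' => ‖X' j ω' - X j ω'‖) ω) ∂μ := by
          exact integral_congr_ae (Filter.Eventually.of_forall hsplit)
      _ = (∫ ω, Set.indicator A (fun ω' => ‖X j ω' - X' j ω'‖) ω ∂μ)
            + ∫ ω, Set.indicator Aᶜ (fun ω' => ‖X' j ω' - X j ω'‖) ω ∂μ :=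
          integral_add hintI1 hintI2
      _ ≤ 2 * a + 2 * K * (μ Aᶜ).toReal := add_le_add happroxj hI2
      _ ≤ 2 * a + 2 * K * β := by nlinarith
  -- bound the two integrals
  have hT1 : |∫ ω, ⟪X' 0 ω, X' j ω - X j ω⟫ ∂μ| ≤ K * (2 * a + 2 * K * β) := by
    calc |∫ ω, ⟪X' 0 ω, X' j ω - X j ω⟫ ∂μ|
        ≤ ∫ ω, |⟪X' 0 ω, X' j ω - X j ω⟫| ∂μ := by
          simpa [Real.norm_eq_abs] using norm_integral_le_integral_norm
            (fun ω => (⟪X' 0 ω, X' j ω - X j ω⟫ : ℝ)) (μ := μ)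
      _ ≤ ∫ ω, K * ‖X' j ω - X j ω‖ ∂μ := by
          refine integral_mono_ae hint1.abs (hintdj.const_mul K) ?_
          filter_upwards [hbd' 0] with ω h1
          calc |(⟪X' 0 ω, X' j ω - X j ω⟫ : ℝ)| ≤ ‖X' 0 ω‖ * ‖X' j ω - X j ω‖ :=
              abs_real_inner_le_norm _ _
            _ ≤ K * ‖X' j ω - X j ω‖ :=
              mul_le_mul_of_nonneg_right h1 (norm_nonneg _)
      _ = K * ∫ ω, ‖X' j ω - X j ω‖ ∂μ := integral_const_mul K _
      _ ≤ K * (2 * a + 2 * K * β) := by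
          refine mul_le_mul_of_nonneg_left hBdj hK
  have hT2 : |∫ ω, ⟪X' 0 ω - X'' 0 ω, X j ω⟫ ∂μ| ≤ K * (2 * a) := by
    calc |∫ ω, ⟪X' 0 ω - X'' 0 ω, X j ω⟫ ∂μ|
        ≤ ∫ ω, |⟪X' 0 ω - X'' 0 ω, X j ω⟫| ∂μ := by
          simpa [Real.norm_eq_abs] using norm_integral_le_integral_norm
            (fun ω => (⟪X' 0 ω - X'' 0 ω, X j ω⟫ : ℝ)) (μ := μ)
      _ ≤ ∫ ω, K * ‖X' 0 ω - X'' 0 ω‖ ∂μ := by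
          refine integral_mono_ae hint2.abs (hintd0.const_mul K) ?_
          filter_upwards [hbd j] with ω h1
          calc |(⟪X' 0 ω - X'' 0 ω, X j ω⟫ : ℝ)| ≤ ‖X' 0 ω - X'' 0 ω‖ * ‖X j ω‖ :=
              abs_real_inner_le_norm _ _
            _ ≤ ‖X' 0 ω - X'' 0 ω‖ * K :=
              mul_le_mul_of_nonneg_left h1 (norm_nonneg _)
            _ = K * ‖X' 0 ω - X'' 0 ω‖ := mul_comm _ _
      _ = K * ∫ ω, ‖X' 0 ω - X'' 0 ω‖ ∂μ := integral_const_mul K _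
      _ ≤ K * (2 * a) := mul_le_mul_of_nonneg_left happrox'' hK
  -- put everything together
  have hkey : (∫ ω, ⟪X 0 ω, X j ω⟫ ∂μ) - ⟪∫ ω, X 0 ω ∂μ, ∫ ω, X j ω ∂μ⟫
      = (∫ ω, ⟪X' 0 ω, X' j ω - X j ω⟫ ∂μ) + ∫ ω, ⟪X' 0 ω - X'' 0 ω, X j ω⟫ ∂μ := by
    rw [← hE1, ← hE3, ← integral_add hint1 hint2, ← integral_sub]
    · exact integral_congr_ae (Filter.Eventually.of_forall fun ω => hdecomp ω)
    · exact hint _ (K * K) (hm'0.inner hm'j) (by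
        filter_upwards [hbd' 0, hbd' j] with ω h1 h2
        calc ‖(⟪X' 0 ω, X' j ω⟫ : ℝ)‖ ≤ ‖X' 0 ω‖ * ‖X' j ω‖ := by
              simpa [Real.norm_eq_abs] using abs_real_inner_le_norm (X' 0 ω) (X' j ω)
          _ ≤ K * K := by nlinarith [norm_nonneg (X' 0 ω), norm_nonneg (X' j ω)])
    · exact hint _ (K * K) (hm''0.inner hmj) (by
        filter_upwards [hbd'' 0, hbd j] with ω h1 h2
        calc ‖(⟪X'' 0 ω, X j ω⟫ : ℝ)‖ ≤ ‖X'' 0 ω‖ * ‖X j ω‖ := by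
              simpa [Real.norm_eq_abs] using abs_real_inner_le_norm (X'' 0 ω) (X j ω)
          _ ≤ K * K := by nlinarith [norm_nonneg (X'' 0 ω), norm_nonneg (X j ω)])
  rw [hkey]
  calc |(∫ ω, ⟪X' 0 ω, X' j ω - X j ω⟫ ∂μ) + ∫ ω, ⟪X' 0 ω - X'' 0 ω, X j ω⟫ ∂μ|
      ≤ |∫ ω, ⟪X' 0 ω, X' j ω - X j ω⟫ ∂μ| + |∫ ω, ⟪X' 0 ω - X'' 0 ω, X j ω⟫ ∂μ| :=
        abs_add_le _ _
    _ ≤ K * (2 * a + 2 * K * β) + K * (2 * a) := add_le_add hT1 hT2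
    _ = 2 * K ^ 2 * β + 4 * K * a := by ring
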